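/- Assume z_l < 0 for some l ∈ {1,…,N}. Then for every α ∈ ℝ with f(α) < 0, the improper integral I(α) = ∫_α^∞ (F(α) − F(φ))^{−1/2} dφ converges (is finite), and I(α) → 0 as α → +∞. -/

import Mathlib

open Real Filter Set Topology MeasureTheory

private lemma sqrt_tendsto_atTop : Tendsto Real.sqrt atTop atTop := by
  apply tendsto_atTop_atTop.2
  intro bb
  refine ⟨(max bb 0) ^ 2, fun x hx => le_trans (le_max_left bb 0) ?_⟩
  rw [← Real.sqrt_sq (le_max_right bb 0)]
  exact Real.sqrt_le_sqrt hx

/-- The tail comparison integral: `∫_β^∞ (e^{m(φ-β)} - 1)^{-1/2} dφ = π/m`. -/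
private lemma tail_aux {m : ℝ} (hm : 0 < m) (β : ℝ) :
    IntegrableOn (fun φ => (Real.sqrt (Real.exp (m * (φ - β)) - 1))⁻¹) (Set.Ioi β) volume ∧
    (∫ φ in Set.Ioi β, (Real.sqrt (Real.exp (m * (φ - β)) - 1))⁻¹) = π / m := by
  have hm' : m ≠ 0 := ne_of_gt hm
  set H : ℝ → ℝ := fun x => 2 / m * Real.arctan (Real.sqrt (Real.exp (m * (x - β)) - 1))
    with hHdef
  have hcontH : Continuous H := by
    apply continuous_const.mul
    exact Real.continuous_arctan.comp (Real.continuous_sqrt.comp (by fun_prop))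
  have hderiv : ∀ x ∈ Set.Ioi β, HasDerivAt H
      ((Real.sqrt (Real.exp (m * (x - β)) - 1))⁻¹) x := by
    intro x hx
    have hxb : 0 < m * (x - β) := mul_pos hm (sub_pos.2 hx)
    have hu : 0 < Real.exp (m * (x - β)) - 1 := by
      have := Real.one_lt_exp_iff.2 hxb; linarith
    have hsu : 0 < Real.sqrt (Real.exp (m * (x - β)) - 1) := Real.sqrt_pos.2 hu
    have h1 : HasDerivAt (fun y : ℝ => m * (y - β)) m x := by
      simpa using ((hasDerivAt_id x).sub_const β).const_mul m
    have h2 : HasDerivAt (fun y : ℝ => Real.exp (m * (y - β)) - 1)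
        (Real.exp (m * (x - β)) * m) x := h1.exp.sub_const 1
    have h3 := (h2.sqrt (ne_of_gt hu)).arctan
    have h4 := h3.const_mul (2 / m)
    refine h4.congr_deriv ?_
    rw [Real.sq_sqrt hu.le]
    have h5 : 1 + (Real.exp (m * (x - β)) - 1) = Real.exp (m * (x - β)) := by ring
    rw [h5]
    field_simp
  have hpos : ∀ x ∈ Set.Ioi β, 0 ≤ (Real.sqrt (Real.exp (m * (x - β)) - 1))⁻¹ :=
    fun x _ => inv_nonneg.2 (Real.sqrt_nonneg _)
  have hlim : Tendsto H atTop (𝓝 (2 / m * (π / 2))) := by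
    have l1 : Tendsto (fun x : ℝ => m * (x - β)) atTop atTop :=
      (tendsto_atTop_add_const_right atTop (-(m * β))
        (Tendsto.const_mul_atTop hm tendsto_id)).congr (fun x => by simp; ring)
    have l2 : Tendsto (fun x : ℝ => Real.exp (m * (x - β)) - 1) atTop atTop :=
      (tendsto_atTop_add_const_right atTop (-1)
        (Real.tendsto_exp_atTop.comp l1)).congr
        (fun x => by simp [Function.comp, sub_eq_add_neg])
    have l3 : Tendsto (fun x : ℝ => Real.sqrt (Real.exp (m * (x - β)) - 1)) atTop atTop :=
      sqrt_tendsto_atTop.comp l2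
    have l4 : Tendsto (fun x : ℝ => Real.arctan (Real.sqrt (Real.exp (m * (x - β)) - 1)))
        atTop (𝓝 (π / 2)) :=
      (Real.tendsto_arctan_atTop.mono_right nhdsWithin_le_nhds).comp l3
    exact l4.const_mul (2 / m)
  have hHβ : H β = 0 := by simp [hHdef]
  refine ⟨integrableOn_Ioi_deriv_of_nonneg hcontH.continuousWithinAt hderiv hpos hlim, ?_⟩
  rw [integral_Ioi_of_hasDerivAt_of_nonneg hcontH.continuousWithinAt hderiv hpos hlim, hHβ]
  field_simp
  ring

/-- If some valence `z l < 0`, then for every `α` with `f(α) < 0` the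
improper integral `I(α) = ∫_α^∞ (F(α) − F(φ))^{-1/2} dφ` converges, and `I(α) → 0`
as `α → +∞`. -/
theorem stmt19 {N : ℕ} (hN : 1 ≤ N) (z c : Fin N → ℝ)
    (hz : ∀ j, z j ≠ 0) (hc : ∀ j, 0 < c j) (q0 : ℝ)
    (f F : ℝ → ℝ)
    (hf : ∀ φ : ℝ, f φ = q0 + ∑ j, z j * c j * Real.exp (-(z j) * φ))
    (hF : ∀ φ : ℝ, F φ = q0 * φ - ∑ j, c j * Real.exp (-(z j) * φ))
    (hzneg : ∃ l, z l < 0) :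
    (∀ α : ℝ, f α < 0 →
      IntegrableOn (fun φ => 1 / Real.sqrt (F α - F φ)) (Set.Ioi α) volume) ∧
    Tendsto (fun α : ℝ => ∫ φ in Set.Ioi α, 1 / Real.sqrt (F α - F φ)) atTop
      (𝓝 0) := by
  obtain ⟨l, hl⟩ := hzneg
  have hfc : Continuous f := by rw [funext hf]; fun_prop
  have hFc : Continuous F := by rw [funext hF]; fun_prop
  -- derivative of F is f
  have hFd : ∀ x : ℝ, HasDerivAt F (f x) x := by
    intro x
    rw [funext hF, hf x]
    have h1 : HasDerivAt (fun φ : ℝ => q0 * φ) q0 x := by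
      simpa using (hasDerivAt_id x).const_mul q0
    have h2 : ∀ j : Fin N, HasDerivAt (fun φ => c j * Real.exp (-z j * φ))
        (c j * (Real.exp (-z j * x) * -z j)) x := by
      intro j
      have h : HasDerivAt (fun φ : ℝ => -z j * φ) (-z j) x := by
        simpa using (hasDerivAt_id x).const_mul (-z j)
      exact h.exp.const_mul (c j)
    have h3 : HasDerivAt (fun φ : ℝ => ∑ j, c j * Real.exp (-z j * φ))
        (∑ j, c j * (Real.exp (-z j * x) * -z j)) x :=
      HasDerivAt.fun_sum (fun j _ => h2 j)
    have h4 := h1.sub h3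
    have h5 : ∑ j, c j * (Real.exp (-z j * x) * -z j)
        = -∑ j, z j * c j * Real.exp (-z j * x) := by
      rw [← Finset.sum_neg_distrib]
      exact Finset.sum_congr rfl fun j _ => by ring
    rw [h5] at h4
    exact h4.congr_deriv (sub_neg_eq_add _ _)
  -- f is antitone
  have hanti : ∀ s t : ℝ, s ≤ t → f t ≤ f s := by
    intro s t hst
    rw [hf s, hf t]
    apply add_le_add le_rfl
    apply Finset.sum_le_sum
    intro j _
    rcases (hz j).lt_or_gt with h | h
    · have he : Real.exp (-z j * s) ≤ Real.exp (-z j * t) :=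
        Real.exp_le_exp.2 (by nlinarith)
      have key : 0 ≤ (-z j) * c j * (Real.exp (-z j * t) - Real.exp (-z j * s)) :=
        mul_nonneg (mul_nonneg (by linarith) (hc j).le) (by linarith)
      nlinarith [key]
    · have he : Real.exp (-z j * t) ≤ Real.exp (-z j * s) :=
        Real.exp_le_exp.2 (by nlinarith)
      have key : 0 ≤ z j * c j * (Real.exp (-z j * s) - Real.exp (-z j * t)) :=
        mul_nonneg (mul_nonneg (by linarith) (hc j).le) (by linarith)
      nlinarith [key]
  -- FTC
  have hFTC : ∀ a b : ℝ, F a - F b = ∫ t in a..b, (-f t) := by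
    intro a b
    have h1 : ∫ t in a..b, f t = F b - F a :=
      intervalIntegral.integral_eq_sub_of_hasDerivAt (fun t _ => hFd t)
        (hfc.intervalIntegrable a b)
    rw [intervalIntegral.integral_neg, h1]; ring
  -- linear lower bound
  have hGlin : ∀ a b : ℝ, a ≤ b → (-f a) * (b - a) ≤ F a - F b := by
    intro a b hab
    rw [hFTC a b]
    have h1 : ∫ _ in a..b, (-f a) ≤ ∫ t in a..b, (-f t) :=
      intervalIntegral.integral_mono_on hab intervalIntegrable_const
        (hfc.neg.intervalIntegrable a b) (fun t ht => neg_le_neg (hanti a t ht.1))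
    simpa [intervalIntegral.integral_const, smul_eq_mul, mul_comm] using h1
  have hFle : ∀ a b' : ℝ, f a < 0 → a ≤ b' → F b' ≤ F a := by
    intro a b' hfa hab
    have h := hGlin a b' hab
    have key : 0 ≤ (-f a) * (b' - a) :=
      mul_nonneg (by linarith) (by linarith)
    linarith
  -- the exponential constant
  obtain ⟨m, hmdef⟩ : ∃ m : ℝ, m = -z l := ⟨_, rfl⟩
  have hm : 0 < m := by rw [hmdef]; linarith
  have hm' : m ≠ 0 := ne_of_gt hm
  obtain ⟨D, hD⟩ : ∃ D : ℝ, D = |q0| + ∑ j, |z j| * c j := ⟨_, rfl⟩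
  have hDnn : 0 ≤ D := by
    rw [hD]
    have : 0 ≤ ∑ j, |z j| * c j :=
      Finset.sum_nonneg fun j _ => mul_nonneg (abs_nonneg _) (hc j).le
    positivity
  -- lower bound on -f for t ≥ 0
  have hflow : ∀ t : ℝ, 0 ≤ t → m * c l * Real.exp (m * t) - D ≤ -f t := by
    intro t ht
    rw [hf t]
    have hfneg : -(q0 + ∑ j, z j * c j * Real.exp (-z j * t))
        = -q0 + ∑ j, -(z j * c j * Real.exp (-z j * t)) := by
      rw [Finset.sum_neg_distrib]; ring
    rw [hfneg]
    have e1 : -(z l * c l * Real.exp (-z l * t)) = m * c l * Real.exp (m * t) := by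
      rw [hmdef]; ring
    have hsplit : ∑ j, -(z j * c j * Real.exp (-z j * t))
        = m * c l * Real.exp (m * t)
          + ∑ j ∈ Finset.univ.erase l, -(z j * c j * Real.exp (-z j * t)) := by
      rw [← Finset.add_sum_erase _ _ (Finset.mem_univ l), e1]
    have h2 : ∀ j ∈ Finset.univ.erase l,
        -(|z j| * c j) ≤ -(z j * c j * Real.exp (-z j * t)) := by
      intro j _
      rcases (hz j).lt_or_gt with h | h
      · have habs : |z j| = -z j := abs_of_neg h
        have key1 : 0 ≤ (-z j) * c j * Real.exp (-z j * t) :=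
          mul_nonneg (mul_nonneg (by linarith) (hc j).le) (Real.exp_pos _).le
        have key2 : 0 ≤ (-z j) * c j := mul_nonneg (by linarith) (hc j).le
        rw [habs]
        nlinarith [key1, key2]
      · have habs : |z j| = z j := abs_of_pos h
        have he : Real.exp (-z j * t) ≤ 1 := by
          rw [← Real.exp_zero]
          exact Real.exp_le_exp.2 (by nlinarith)
        have key : 0 ≤ z j * c j * (1 - Real.exp (-z j * t)) :=
          mul_nonneg (mul_nonneg (by linarith) (hc j).le) (by linarith)
        rw [habs]
        nlinarith [key]
    have hsum := Finset.sum_le_sum h2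
    have hneg : ∑ j ∈ Finset.univ.erase l, -(|z j| * c j)
        = -(∑ j ∈ Finset.univ.erase l, |z j| * c j) := by
      rw [Finset.sum_neg_distrib]
    have hsum2 : ∑ j ∈ Finset.univ.erase l, |z j| * c j ≤ ∑ j, |z j| * c j :=
      Finset.sum_le_sum_of_subset_of_nonneg (Finset.erase_subset _ _)
        (fun j _ _ => mul_nonneg (abs_nonneg _) (hc j).le)
    have habsq : -|q0| ≤ -q0 := neg_le_neg (le_abs_self q0)
    rw [hsplit, hD]
    rw [hneg] at hsum
    linarith
  -- threshold T₀
  have htend : Tendsto (fun t : ℝ => m * c l * Real.exp (m * t)) atTop atTop := by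
    have h1 : Tendsto (fun t : ℝ => m * t) atTop atTop :=
      Tendsto.const_mul_atTop hm tendsto_id
    exact Tendsto.const_mul_atTop (mul_pos hm (hc l)) (Real.tendsto_exp_atTop.comp h1)
  obtain ⟨T₁, hT₁⟩ := eventually_atTop.1 (htend.eventually_ge_atTop (2 * D))
  obtain ⟨T₀, hT₀def⟩ : ∃ T : ℝ, T = max T₁ 0 := ⟨_, rfl⟩
  have hT₀nn : (0 : ℝ) ≤ T₀ := hT₀def ▸ le_max_right _ _
  obtain ⟨b, hbdef⟩ : ∃ b : ℝ, b = m * c l / 2 := ⟨_, rfl⟩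
  have hb : 0 < b := by
    rw [hbdef]
    have := mul_pos hm (hc l)
    linarith
  have hfexp : ∀ t : ℝ, T₀ ≤ t → b * Real.exp (m * t) ≤ -f t := by
    intro t ht
    have h0 : (0 : ℝ) ≤ t := le_trans (hT₀def ▸ le_max_right _ _ : (0:ℝ) ≤ T₀) ht
    have h1 := hflow t h0
    have h2 := hT₁ t (le_trans (hT₀def ▸ le_max_left _ _ : T₁ ≤ T₀) ht)
    rw [hbdef]
    linarith
  -- exponential lower bound on F β - F φ
  have hGexp : ∀ β φ : ℝ, T₀ ≤ β → β ≤ φ →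
      b / m * Real.exp (m * β) * (Real.exp (m * (φ - β)) - 1) ≤ F β - F φ := by
    intro β φ hβ hφ
    rw [hFTC β φ]
    have hd : ∀ t : ℝ, HasDerivAt (fun s : ℝ => b / m * Real.exp (m * s))
        (b * Real.exp (m * t)) t := by
      intro t
      have h1 : HasDerivAt (fun s : ℝ => m * s) m t := by
        simpa using (hasDerivAt_id t).const_mul m
      have h2 := h1.exp.const_mul (b / m)
      refine h2.congr_deriv ?_
      field_simp
    have hval : ∫ t in β..φ, b * Real.exp (m * t)
        = b / m * Real.exp (m * φ) - b / m * Real.exp (m * β) :=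
      intervalIntegral.integral_eq_sub_of_hasDerivAt (fun t _ => hd t)
        (Continuous.intervalIntegrable (by fun_prop) β φ)
    have hint : ∫ t in β..φ, b * Real.exp (m * t) ≤ ∫ t in β..φ, (-f t) := by
      apply intervalIntegral.integral_mono_on hφ
        (Continuous.intervalIntegrable (by fun_prop) β φ)
        (hfc.neg.intervalIntegrable β φ)
      intro t ht
      exact hfexp t (le_trans hβ ht.1)
    have hexp : b / m * Real.exp (m * β) * (Real.exp (m * (φ - β)) - 1)
        = b / m * Real.exp (m * φ) - b / m * Real.exp (m * β) := by
      have h3 : m * β + m * (φ - β) = m * φ := by ring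
      rw [mul_sub, mul_assoc, ← Real.exp_add, h3]
      ring
    rw [hexp, ← hval]
    exact hint
  -- measurability of the integrand
  have hmeas : ∀ α : ℝ, Measurable (fun φ => 1 / Real.sqrt (F α - F φ)) := by
    intro α
    simp only [one_div]
    exact ((Real.continuous_sqrt.comp (continuous_const.sub hFc)).measurable).inv
  -- pointwise tail bound
  have hptwise : ∀ α β φ : ℝ, f α < 0 → α ≤ β → T₀ ≤ β → β < φ →
      1 / Real.sqrt (F α - F φ)
        ≤ (Real.sqrt (b / m * Real.exp (m * β)))⁻¹
            * (Real.sqrt (Real.exp (m * (φ - β)) - 1))⁻¹ := by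
    intro α β φ hα hαβ hT₀β hφ
    have h0 : β ≤ φ := hφ.le
    have h1 := hGexp β φ hT₀β h0
    have h2 : F β ≤ F α := hFle α β hα hαβ
    have hx : 0 < Real.exp (m * (φ - β)) - 1 := by
      have hpos : 0 < m * (φ - β) := mul_pos hm (by linarith)
      linarith [Real.one_lt_exp_iff.2 hpos]
    have hc0 : 0 < b / m * Real.exp (m * β) := by positivity
    have h3 : Real.sqrt (b / m * Real.exp (m * β) * (Real.exp (m * (φ - β)) - 1))
        ≤ Real.sqrt (F α - F φ) := Real.sqrt_le_sqrt (by linarith)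
    rw [Real.sqrt_mul hc0.le] at h3
    have h4 : 0 < Real.sqrt (b / m * Real.exp (m * β))
        * Real.sqrt (Real.exp (m * (φ - β)) - 1) :=
      mul_pos (Real.sqrt_pos.2 hc0) (Real.sqrt_pos.2 hx)
    calc 1 / Real.sqrt (F α - F φ)
        ≤ 1 / (Real.sqrt (b / m * Real.exp (m * β))
            * Real.sqrt (Real.exp (m * (φ - β)) - 1)) :=
          one_div_le_one_div_of_le h4 h3
      _ = (Real.sqrt (b / m * Real.exp (m * β)))⁻¹
            * (Real.sqrt (Real.exp (m * (φ - β)) - 1))⁻¹ := by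
          rw [one_div, mul_inv]
  -- Part 1 : integrability
  have Hint : ∀ α : ℝ, f α < 0 →
      IntegrableOn (fun φ => 1 / Real.sqrt (F α - F φ)) (Set.Ioi α) volume := by
    intro α hα
    have ha0 : 0 < -f α := by linarith
    obtain ⟨β, hβdef⟩ : ∃ β : ℝ, β = max α T₀ := ⟨_, rfl⟩
    have hαβ : α ≤ β := hβdef ▸ le_max_left _ _
    have hT₀β : T₀ ≤ β := hβdef ▸ le_max_right _ _
    have hunion : Set.Ioi α = Set.Ioc α β ∪ Set.Ioi β := (Set.Ioc_union_Ioi_eq_Ioi hαβ).symm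
    rw [hunion]
    apply IntegrableOn.union
    · -- near piece
      apply Integrable.mono'
        (g := fun φ => (Real.sqrt (-f α))⁻¹ * ((φ - α) ^ (-(1/2) : ℝ)))
      · apply Integrable.const_mul
        have h1 : IntervalIntegrable (fun x : ℝ => x ^ (-(1/2) : ℝ)) volume 0 (β - α) :=
          intervalIntegral.intervalIntegrable_rpow' (by norm_num)
        have h2 := h1.comp_sub_right α
        simp only [zero_add, sub_add_cancel] at h2
        exact (intervalIntegrable_iff_integrableOn_Ioc_of_le hαβ).1 h2
      · exact (hmeas α).aestronglyMeasurable
      · refine (ae_restrict_iff' measurableSet_Ioc).2 (ae_of_all _ ?_)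
        intro φ hφ
        have hφα : 0 < φ - α := by linarith [hφ.1]
        have h1 : (-f α) * (φ - α) ≤ F α - F φ := hGlin α φ hφ.1.le
        have h2 : 0 < (-f α) * (φ - α) := mul_pos ha0 hφα
        have h3 : Real.sqrt ((-f α) * (φ - α)) ≤ Real.sqrt (F α - F φ) :=
          Real.sqrt_le_sqrt h1
        have h4 : 0 < Real.sqrt ((-f α) * (φ - α)) := Real.sqrt_pos.2 h2
        rw [Real.norm_eq_abs, abs_of_nonneg (by positivity)]
        calc 1 / Real.sqrt (F α - F φ) ≤ 1 / Real.sqrt ((-f α) * (φ - α)) :=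
              one_div_le_one_div_of_le h4 h3
          _ = (Real.sqrt (-f α))⁻¹ * ((φ - α) ^ (-(1/2) : ℝ)) := by
              rw [Real.sqrt_mul ha0.le, one_div, mul_inv,
                Real.rpow_neg hφα.le, Real.sqrt_eq_rpow, Real.sqrt_eq_rpow]
    · -- tail piece
      apply Integrable.mono'
        (g := fun φ => (Real.sqrt (b / m * Real.exp (m * β)))⁻¹
          * (Real.sqrt (Real.exp (m * (φ - β)) - 1))⁻¹)
      · exact (tail_aux hm β).1.const_mul _
      · exact (hmeas α).aestronglyMeasurable
      · refine (ae_restrict_iff' measurableSet_Ioi).2 (ae_of_all _ ?_)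
        intro φ hφ
        rw [Real.norm_eq_abs, abs_of_nonneg (by positivity)]
        exact hptwise α β φ hα hαβ hT₀β hφ
  refine ⟨Hint, ?_⟩
  -- Part 2 : the limit
  have hub : ∀ α : ℝ, T₀ ≤ α →
      (∫ φ in Set.Ioi α, 1 / Real.sqrt (F α - F φ))
        ≤ (Real.sqrt (b / m * Real.exp (m * α)))⁻¹ * (π / m) := by
    intro α hα
    have hfα : f α < 0 := by
      have h1 := hfexp α hα
      have h2 := mul_pos hb (Real.exp_pos (m * α))
      linarith
    have hint := Hint α hfα
    have htail := tail_aux hm α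
    have hmono : (∫ φ in Set.Ioi α, 1 / Real.sqrt (F α - F φ))
        ≤ ∫ φ in Set.Ioi α, (Real.sqrt (b / m * Real.exp (m * α)))⁻¹
            * (Real.sqrt (Real.exp (m * (φ - α)) - 1))⁻¹ := by
      apply setIntegral_mono_on hint (htail.1.const_mul _) measurableSet_Ioi
      intro φ hφ
      exact hptwise α α φ hfα le_rfl hα hφ
    rw [MeasureTheory.integral_const_mul, htail.2] at hmono
    exact hmono
  have hup : Tendsto (fun α : ℝ =>
      (Real.sqrt (b / m * Real.exp (m * α)))⁻¹ * (π / m)) atTop (𝓝 0) := by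
    have h1 : Tendsto (fun α : ℝ => b / m * Real.exp (m * α)) atTop atTop := by
      apply Tendsto.const_mul_atTop (by positivity)
      exact Real.tendsto_exp_atTop.comp (Tendsto.const_mul_atTop hm tendsto_id)
    have h2 : Tendsto (fun α : ℝ => Real.sqrt (b / m * Real.exp (m * α))) atTop atTop :=
      sqrt_tendsto_atTop.comp h1
    have h3 := h2.inv_tendsto_atTop
    have h4 := h3.mul_const (π / m)
    simpa using h4
  apply tendsto_of_tendsto_of_tendsto_of_le_of_le' tendsto_const_nhds hup
  · filter_upwards [] with α
    exact setIntegral_nonneg measurableSet_Ioi (fun x _ => by positivity)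
  · filter_upwards [eventually_ge_atTop T₀] with α hα using hub α hα
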